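/- Let X be a Peano continuum having a free arc, which is neither an arc nor a circle, let F be a commutative subsemigroup of C^0(X) consisting of continuous open maps, and let f_1, …, f_m ∈ F. Let A be a free arc contained in a maximal free open interval J such that A is a jumping arc of {f_1, …, f_m} and A, f_1(A), …, f_m(A) are all contained in J. If g ∈ F restricts to an injective map on J, then g(A) is also a jumping arc of {f_1, …, f_m}. -/
import Mathlib


open Set Metric Topology

/-- The whole space `X` is an arc, i.e. homeomorphic to `[0,1]`. -/
def SpaceIsArc (X : Type*) [TopologicalSpace X] : Prop :=
  Nonempty (X ≃ₜ Set.Icc (0:ℝ) 1)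

/-- The whole space `X` is a circle, i.e. homeomorphic to the unit circle in `ℂ`. -/
def SpaceIsCircle (X : Type*) [TopologicalSpace X] : Prop :=
  Nonempty (X ≃ₜ Metric.sphere (0:ℂ) 1)

/-- A subset `A` is an arc: with the subspace topology it is homeomorphic to `[0,1]`. -/
def IsArc {X : Type*} [TopologicalSpace X] (A : Set X) : Prop :=
  Nonempty (A ≃ₜ Set.Icc (0:ℝ) 1)

/-- A subset `A` is a circle: with the subspace topology it is homeomorphic to `S¹`. -/
def IsCircleSet {X : Type*} [TopologicalSpace X] (A : Set X) : Prop :=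
  Nonempty (A ≃ₜ Metric.sphere (0:ℂ) 1)

/-- `A` is an arc with endpoints `a` and `b`: it is the image of a continuous
injective parametrization of `[0,1]` with `γ 0 = a` and `γ 1 = b`. -/
def IsArcEnds {X : Type*} [TopologicalSpace X] (A : Set X) (a b : X) : Prop :=
  ∃ γ : ℝ → X, ContinuousOn γ (Set.Icc 0 1) ∧ Set.InjOn γ (Set.Icc 0 1) ∧
    γ '' Set.Icc 0 1 = A ∧ γ 0 = a ∧ γ 1 = b

/-- A free open interval: an open subset homeomorphic to `(0,1)`. -/
def IsFreeOpenInterval {X : Type*} [TopologicalSpace X] (J : Set X) : Prop :=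
  IsOpen J ∧ Nonempty (J ≃ₜ Set.Ioo (0:ℝ) 1)

/-- A free arc: the closure of a free open interval, homeomorphic to `[0,1]`. -/
def IsFreeArc {X : Type*} [TopologicalSpace X] (A : Set X) : Prop :=
  ∃ J : Set X, IsFreeOpenInterval J ∧ A = closure J ∧ IsArc A

/-- A maximal free open interval: no free open interval properly contains it. -/
def IsMaxFreeOpenInterval {X : Type*} [TopologicalSpace X] (J : Set X) : Prop :=
  IsFreeOpenInterval J ∧ ∀ K : Set X, IsFreeOpenInterval K → J ⊆ K → J = K

/-- `x` is an endpoint of the space `X`: every open set containing `x` contains an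
open neighborhood of `x` whose boundary is a single point. -/
def IsEndpointOf (X : Type*) [TopologicalSpace X] (x : X) : Prop :=
  ∀ U : Set X, IsOpen U → x ∈ U → ∃ V : Set X, IsOpen V ∧ x ∈ V ∧ V ⊆ U ∧
    ∃ y : X, frontier V = {y}

/-- A maximal free open interval of Type I: its closure is an arc `J ∪ {a,b}` with
`a, b ∉ J` and at least one of `a, b` an endpoint of `X`. -/
def IsTypeI {X : Type*} [TopologicalSpace X] (J : Set X) : Prop :=
  IsMaxFreeOpenInterval J ∧ ∃ a b : X, a ≠ b ∧ a ∉ J ∧ b ∉ J ∧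
    closure J = J ∪ {a, b} ∧ IsArcEnds (closure J) a b ∧
    (IsEndpointOf X a ∨ IsEndpointOf X b)

/-- The model simple triod in the complex plane: three unit segments from the
origin in directions `π/3`, `π`, `5π/3`. -/
noncomputable def triodModel : Set ℂ :=
  ⋃ θ ∈ ({Real.pi / 3, Real.pi, 5 * Real.pi / 3} : Set ℝ),
    (fun r : ℝ => (r : ℂ) * Complex.exp (θ * Complex.I)) '' Set.Icc (0:ℝ) 1

/-- `A` is a simple triod. -/
def IsSimpleTriod {X : Type*} [TopologicalSpace X] (A : Set X) : Prop :=
  Nonempty (A ≃ₜ triodModel)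

/-- `U` contains no simple triod. -/
def ContainsNoTriod {X : Type*} [TopologicalSpace X] (U : Set X) : Prop :=
  ∀ A : Set X, A ⊆ U → ¬ IsSimpleTriod A

/-- The distance between two subsets of a metric space:
`d(S,T) = inf { dist s t | s ∈ S, t ∈ T }`. -/
noncomputable def setDist {X : Type*} [MetricSpace X] (S T : Set X) : ℝ :=
  sInf (Set.image2 dist S T)

/-- Claim B: If `A` is a free arc in a maximal free open interval
`J`, `A` is a jumping arc of `{f₁,…,f_m} ⊆ F`, `A, f₁(A),…,f_m(A) ⊆ J`, and
`g ∈ F` is injective on `J`, then `g(A)` is also a jumping arc of `{f₁,…,f_m}`. -/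
theorem stmt_14 (X : Type*) [MetricSpace X] [CompactSpace X] [ConnectedSpace X]
    [LocallyConnectedSpace X]
    (hfree : ∃ A : Set X, IsFreeArc A)
    (harc : ¬ SpaceIsArc X) (hcirc : ¬ SpaceIsCircle X)
    (F : Set (X → X))
    (hcont : ∀ f ∈ F, Continuous f)
    (hopen : ∀ f ∈ F, IsOpenMap f)
    (hsemi : ∀ f ∈ F, ∀ g ∈ F, f ∘ g ∈ F)
    (hcomm : ∀ f ∈ F, ∀ g ∈ F, f ∘ g = g ∘ f)
    (m : ℕ) (f : Fin m → X → X) (hf : ∀ j, f j ∈ F)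
    (A J : Set X) (hJ : IsMaxFreeOpenInterval J)
    (hA : IsFreeArc A) (hAJ : A ⊆ J)
    (hjump : ∀ j : Fin m, A ∩ (f j '' A) = ∅)
    (hfAJ : ∀ j : Fin m, f j '' A ⊆ J)
    (g : X → X) (hg : g ∈ F) (hginj : Set.InjOn g J) :
    IsArc (g '' A) ∧ ∀ j : Fin m, (g '' A) ∩ (f j '' (g '' A)) = ∅ := by
  obtain ⟨_, _, _, ⟨e⟩⟩ := hA
  have hcg : Continuous g := hcont g hg
  have hAcomp : CompactSpace A := e.symm.compactSpace
  have hinjA : Set.InjOn g A := hginj.mono hAJ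
  constructor
  · -- g '' A is an arc
    have hco : Continuous (fun x : A => (⟨g x, Set.mem_image_of_mem g x.2⟩ : g '' A)) :=
      (hcg.comp continuous_subtype_val).subtype_mk _
    have h1 : A ≃ₜ (g '' A) :=
      Continuous.homeoOfEquivCompactToT2 (f := Equiv.Set.imageOfInjOn g A hinjA) hco
    exact ⟨h1.symm.trans e⟩
  · intro j
    have hcm : f j ∘ g = g ∘ f j := hcomm (f j) (hf j) g hg
    have him : f j '' (g '' A) = g '' (f j '' A) := by
      rw [← Set.image_comp, hcm, Set.image_comp]
    rw [him, ← hginj.image_inter hAJ (hfAJ j), hjump j, Set.image_empty]
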